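/- For a commutative ring A, every prime ideal of A is maximal if and only if for every prime ideal 𝔭 the canonical localization map A → A_𝔭 is surjective. -/

import Mathlib

/-- In a ring where every prime is maximal, every element `s` satisfies
`s^n * (1 - a*s) = 0` for some `n`, `a`. -/
lemma exists_pow_mul_eq_zero_of_primes_maximal {A : Type*} [CommRing A]
    (h : ∀ p : Ideal A, p.IsPrime → p.IsMaximal) (s : A) :
    ∃ (n : ℕ) (a : A), s ^ n * (1 - a * s) = 0 := by
  by_contra hc
  push_neg at hc
  set M : Submonoid A :=
    { carrier := {x | ∃ (n : ℕ) (a : A), x = s ^ n * (1 - a * s)}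
      one_mem' := ⟨0, 0, by ring⟩
      mul_mem' := by
        rintro x y ⟨n, a, rfl⟩ ⟨m, b, rfl⟩
        exact ⟨n + m, a + b - a * b * s, by ring⟩ } with hM
  have h0 : Disjoint ((⊥ : Ideal A) : Set A) (M : Set A) := by
    rw [Set.disjoint_left]
    rintro x hx ⟨n, a, rfl⟩
    exact hc n a hx
  obtain ⟨q, hq, -, hdisj⟩ := Ideal.exists_le_prime_disjoint (⊥ : Ideal A) M h0
  have hsq : s ∉ q := fun hs =>
    Set.disjoint_left.mp hdisj hs ⟨1, 0, by ring⟩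
  obtain ⟨y, i, hi, hyi⟩ := (h q hq).exists_inv hsq
  have : (1 - y * s) ∈ q := by
    have : (1 : A) - y * s = i := by linear_combination -hyi
    rwa [this]
  exact Set.disjoint_left.mp hdisj this ⟨0, y, by ring⟩

theorem primes_maximal_iff_localizations_surjective (A : Type*) [CommRing A] :
    (∀ p : Ideal A, p.IsPrime → p.IsMaximal) ↔
      ∀ (p : Ideal A) (hp : p.IsPrime),
        Function.Surjective
          (algebraMap A (Localization (@Ideal.primeCompl A _ p hp))) := by
  constructor
  · intro h p hp z
    haveI := hp
    obtain ⟨⟨r, t⟩, rfl⟩ := IsLocalization.mk'_surjective p.primeCompl z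
    obtain ⟨n, a, hna⟩ := exists_pow_mul_eq_zero_of_primes_maximal h (t : A)
    have htn : ((t : A) ^ n) ∈ p.primeCompl := pow_mem t.2 n
    have key : algebraMap A (Localization p.primeCompl) (a * t) = 1 := by
      rw [← map_one (algebraMap A (Localization p.primeCompl))]
      rw [IsLocalization.eq_iff_exists p.primeCompl]
      exact ⟨⟨(t : A) ^ n, htn⟩, by linear_combination -hna⟩
    refine ⟨r * a, ?_⟩
    rw [map_mul, eq_comm, IsLocalization.mk'_eq_iff_eq_mul,
      mul_assoc, ← map_mul, key, mul_one]
  · intro h p hp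
    haveI := hp
    have := Ideal.comap_isMaximal_of_surjective
      (algebraMap A (Localization p.primeCompl)) (h p hp)
      (K := IsLocalRing.maximalIdeal (Localization p.primeCompl))
    rwa [← Ideal.under_def, Localization.AtPrime.comap_maximalIdeal] at this
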